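/- Let G be a finite simple graph on n vertices. If n − 2 is an eigenvalue of the signless Laplacian matrix Q(G) with multiplicity at least 2 (i.e., (X − (n−2))^2 divides the characteristic polynomial of Q(G)) and the largest eigenvalue of Q(G) is strictly greater than n − 2, then the complement of G is disconnected (equivalently, G is the join of two graphs). -/

import Mathlib

open Polynomial Matrix

/-- The Petersen graph: vertices are the 2-element subsets of a 5-element set,
adjacent iff disjoint. -/
def petersen : SimpleGraph {s : Finset (Fin 5) // s.card = 2} where
  Adj a b := Disjoint a.1 b.1
  symm := ⟨fun _ _ h => h.symm⟩
  loopless := ⟨fun a h => by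
    have h2 := a.2
    simp only [disjoint_self, Finset.bot_eq_empty] at h
    simp [h] at h2⟩

instance : DecidableRel petersen.Adj :=
  fun a b => decidable_of_iff (Disjoint a.1 b.1) Iff.rfl

/-- The join of two simple graphs: keep all edges and connect every
vertex of the first graph to every vertex of the second. -/
def SimpleGraph.join {α β : Type*} (G : SimpleGraph α) (H : SimpleGraph β) :
    SimpleGraph (α ⊕ β) where
  Adj u v := match u, v with
    | Sum.inl u, Sum.inl v => G.Adj u v
    | Sum.inr u, Sum.inr v => H.Adj u v
    | _, _ => True
  symm := ⟨fun u v => match u, v with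
    | Sum.inl _, Sum.inl _ => G.adj_symm
    | Sum.inr _, Sum.inr _ => H.adj_symm
    | Sum.inl _, Sum.inr _ | Sum.inr _, Sum.inl _ => fun _ => trivial⟩
  loopless := ⟨fun u => by cases u <;> simp⟩

instance {α β : Type*} (G : SimpleGraph α) (H : SimpleGraph β)
    [DecidableRel G.Adj] [DecidableRel H.Adj] :
    DecidableRel (G.join H).Adj := fun u v =>
  match u, v with
  | Sum.inl u, Sum.inl v => decidable_of_iff (G.Adj u v) Iff.rfl
  | Sum.inr u, Sum.inr v => decidable_of_iff (H.Adj u v) Iff.rfl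
  | Sum.inl _, Sum.inr _ => .isTrue trivial
  | Sum.inr _, Sum.inl _ => .isTrue trivial

/-- The signless Laplacian matrix `Q(G) = D(G) + A(G)` of a graph, over `ℝ`. -/
def signlessLap {V : Type*} [Fintype V] [DecidableEq V] (G : SimpleGraph V)
    [DecidableRel G.Adj] : Matrix V V ℝ :=
  G.degMatrix ℝ + G.adjMatrix ℝ

/-! ### Auxiliary lemmas -/

section CharpolyAux

lemma charpoly_diag {n : Type*} [Fintype n] [DecidableEq n] (d : n → ℝ) :
    (Matrix.diagonal d).charpoly = ∏ i, (X - C (d i)) := by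
  have : charmatrix (Matrix.diagonal d) = Matrix.diagonal (fun i => X - C (d i)) := by
    ext i j
    by_cases h : i = j
    · subst h; simp
    · simp [h, Matrix.diagonal_apply_ne _ h]
  rw [Matrix.charpoly, this, Matrix.det_diagonal]

lemma charpoly_herm {n : Type*} [Fintype n] [DecidableEq n] {A : Matrix n n ℝ}
    (hA : A.IsHermitian) : A.charpoly = ∏ i, (X - C (hA.eigenvalues i)) := by
  set U : Matrix n n ℝ := (hA.eigenvectorUnitary : Matrix n n ℝ) with hUdef
  have hU1 : U * star U = 1 := (Matrix.mem_unitaryGroup_iff).mp hA.eigenvectorUnitary.2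
  have hsp : A = U * Matrix.diagonal hA.eigenvalues * star U := by
    simpa using hA.spectral_theorem
  set φ : Matrix n n ℝ →+* Matrix n n ℝ[X] := (C : ℝ →+* ℝ[X]).mapMatrix with hφ
  have key : charmatrix A = φ U * charmatrix (Matrix.diagonal hA.eigenvalues) * φ (star U) := by
    conv_lhs => rw [charmatrix, hsp]
    rw [charmatrix, mul_sub, sub_mul]
    congr 1
    · have hcomm : φ U * Matrix.scalar n (X : ℝ[X]) = Matrix.scalar n (X : ℝ[X]) * φ U :=
        (Matrix.scalar_commute (X : ℝ[X]) (Commute.all X) (φ U)).symm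
      rw [hcomm, mul_assoc, ← _root_.map_mul, hU1, _root_.map_one, mul_one]
    · simp [φ, ← Matrix.mul_assoc]
  have h2 : Matrix.det (φ (star U)) * Matrix.det (φ U) = 1 := by
    rw [← Matrix.det_mul, ← _root_.map_mul,
      show star U * U = 1 from Matrix.mem_unitaryGroup_iff'.mp hA.eigenvectorUnitary.2,
      _root_.map_one, Matrix.det_one]
  rw [Matrix.charpoly, key, Matrix.det_mul, Matrix.det_mul, mul_comm, ← mul_assoc, h2, one_mul]
  exact charpoly_diag _

lemma two_indices {n : Type*} [Fintype n] [DecidableEq n] {A : Matrix n n ℝ}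
    (hA : A.IsHermitian) {c : ℝ} (h : (X - C c) ^ 2 ∣ A.charpoly) :
    ∃ i j, i ≠ j ∧ hA.eigenvalues i = c ∧ hA.eigenvalues j = c := by
  have hp0 : A.charpoly ≠ 0 := (Matrix.charpoly_monic A).ne_zero
  have hm : 2 ≤ rootMultiplicity c A.charpoly := (Polynomial.le_rootMultiplicity_iff hp0).2 h
  have hc : 2 ≤ A.charpoly.roots.count c := by rwa [Polynomial.count_roots]
  rw [charpoly_herm hA] at hc
  have hroots : (∏ i, (X - C (hA.eigenvalues i))).roots = Finset.univ.val.map hA.eigenvalues := by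
    rw [show (∏ i, (X - C (hA.eigenvalues i)))
        = ((Finset.univ.val.map hA.eigenvalues).map fun a => X - C a).prod by
      rw [Multiset.map_map]; rfl]
    exact Polynomial.roots_multiset_prod_X_sub_C _
  rw [hroots, Multiset.count_map] at hc
  have hcard : 1 < (Finset.univ.filter (fun i => c = hA.eigenvalues i)).card := hc
  obtain ⟨i, hi, j, hj, hij⟩ := Finset.one_lt_card.mp hcard
  simp only [Finset.mem_filter] at hi hj
  exact ⟨i, j, hij, hi.2.symm, hj.2.symm⟩

lemma exists_eigvec_index {n : Type*} [Fintype n] [DecidableEq n] {A : Matrix n n ℝ}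
    (hA : A.IsHermitian) {x : ℝ} (h : A.charpoly.IsRoot x) :
    ∃ i, hA.eigenvalues i = x := by
  rw [Polynomial.IsRoot, charpoly_herm hA, Polynomial.eval_prod] at h
  obtain ⟨i, -, hi⟩ := Finset.prod_eq_zero_iff.mp h
  refine ⟨i, ?_⟩
  have := sub_eq_zero.mp (by simpa using hi)
  exact this.symm

end CharpolyAux

section QFAux
open Finset SimpleGraph
variable {V : Type*} [Fintype V] [DecidableEq V] (G : SimpleGraph V) [DecidableRel G.Adj]

lemma signlessLap_isSymm : (signlessLap G).IsSymm :=
  (isSymm_degMatrix (R := ℝ) (G := G)).add (isSymm_adjMatrix (α := ℝ) (G := G))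

lemma signlessLap_quadform (x : V → ℝ) :
    x ⬝ᵥ (signlessLap G *ᵥ x) = (∑ i, ∑ j, if G.Adj i j then (x i + x j) ^ 2 else 0) / 2 := by
  simp_rw [signlessLap, add_mulVec, dotProduct_add, dotProduct_mulVec_degMatrix,
    dotProduct_mulVec_adjMatrix, ← sum_add_distrib, degree_eq_sum_if_adj, sum_mul, ite_mul, one_mul,
    zero_mul, ← sum_add_distrib, ite_add_ite, add_zero]
  rw [← add_self_div_two (∑ i : V, ∑ j : V, _)]
  conv_lhs => enter [1, 2, 2, i, 2, j]; rw [if_congr (adj_comm G i j) rfl rfl]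
  conv_lhs => enter [1, 2]; rw [Finset.sum_comm]
  simp_rw [← sum_add_distrib, ite_add_ite]
  congr 2 with i
  congr 2 with j
  ring_nf

lemma signlessLap_quadform_nonneg (x : V → ℝ) : 0 ≤ x ⬝ᵥ (signlessLap G *ᵥ x) := by
  rw [signlessLap_quadform]
  positivity

lemma signlessLap_quadform_zero {x : V → ℝ} (h : x ⬝ᵥ (signlessLap G *ᵥ x) = 0) :
    ∀ i j, G.Adj i j → x i + x j = 0 := by
  rw [signlessLap_quadform, _root_.div_eq_zero_iff] at h
  replace h := h.resolve_right (by norm_num)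
  rw [Finset.sum_eq_zero_iff_of_nonneg (fun i _ => by positivity)] at h
  intro i j hij
  have h2 := (Finset.sum_eq_zero_iff_of_nonneg (fun j _ => by positivity)).mp
    (h i (Finset.mem_univ i)) j (Finset.mem_univ j)
  rw [if_pos hij] at h2
  exact pow_eq_zero_iff (by norm_num) |>.mp h2

lemma signlessLap_dot_symm (x y : V → ℝ) :
    x ⬝ᵥ (signlessLap G *ᵥ y) = y ⬝ᵥ (signlessLap G *ᵥ x) := by
  rw [dotProduct_mulVec, dotProduct_comm, ← mulVec_transpose, (signlessLap_isSymm G).eq]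

omit [Fintype V] [DecidableEq V] in
lemma walk_prop {H : SimpleGraph V} {x : V → ℝ} (hx : ∀ i j, H.Adj i j → x i + x j = 0)
    {u v : V} (p : H.Walk u v) : x u = 0 → x v = 0 := by
  induction p with
  | nil => exact id
  | cons h _ ih => intro h0; exact ih (by have := hx _ _ h; linarith)

lemma signlessLap_sum_mulVec (y : V → ℝ) (i : V) :
    (signlessLap G *ᵥ y) i + (signlessLap Gᶜ *ᵥ y) i
      = ((Fintype.card V : ℝ) - 2) * y i + ∑ j, y j := by
  have h1 : ∀ (K : SimpleGraph V) (inst : DecidableRel K.Adj),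
      (signlessLap K *ᵥ y) i = ∑ j, (if K.Adj i j then y i + y j else 0) := by
    intro K inst
    rw [signlessLap, add_mulVec]
    simp only [Pi.add_apply, degMatrix_mulVec_apply, adjMatrix_mulVec_apply,
      neighborFinset_eq_filter, Finset.sum_filter]
    rw [K.degree_eq_sum_if_adj (R := ℝ), Finset.sum_mul, ← Finset.sum_add_distrib]
    apply Finset.sum_congr rfl
    intro j _
    by_cases h : K.Adj i j <;> simp [h]
  rw [h1 G _, h1 Gᶜ _, ← Finset.sum_add_distrib]
  have h2 : ∀ j, ((if G.Adj i j then y i + y j else 0) + (if Gᶜ.Adj i j then y i + y j else 0))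
      = (y i + y j) - (if i = j then y i + y j else 0) := by
    intro j
    by_cases hij : i = j
    · subst hij; simp
    · by_cases ha : G.Adj i j <;> simp [ha, hij, SimpleGraph.compl_adj]
  simp_rw [h2]
  rw [Finset.sum_sub_distrib, Finset.sum_add_distrib, Finset.sum_ite_eq, if_pos (Finset.mem_univ i),
    Finset.sum_const, Finset.card_univ, nsmul_eq_mul]
  ring

end QFAux

theorem stmt4 {V : Type} [Fintype V] [DecidableEq V] (G : SimpleGraph V) [DecidableRel G.Adj]
    (h1 : (X - C ((Fintype.card V : ℝ) - 2)) ^ 2 ∣ (signlessLap G).charpoly)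
    (h2 : ∃ x : ℝ, (signlessLap G).charpoly.IsRoot x ∧ (Fintype.card V : ℝ) - 2 < x) :
    ¬ (Gᶜ).Connected := by
  intro hconn
  classical
  obtain ⟨v0⟩ := hconn.nonempty
  set c : ℝ := (Fintype.card V : ℝ) - 2 with hcdef
  have hA : (signlessLap G).IsHermitian := by
    rw [Matrix.IsHermitian, conjTranspose_eq_transpose_of_trivial]
    exact (signlessLap_isSymm G).eq
  set b := hA.eigenvectorBasis with hbdef
  -- inner products of eigenbasis vectors
  have hinner : ∀ i j, (∑ v, (⇑(b i) v) * (⇑(b j) v)) = if i = j then 1 else 0 := by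
    intro i j
    have h := (orthonormal_iff_ite.mp b.orthonormal) i j
    simpa [PiLp.inner_apply, RCLike.inner_apply, conj_trivial, mul_comm] using h
  -- action of the complement's signless Laplacian on eigenvectors
  have hQH : ∀ (t : ℝ) (y : V → ℝ), signlessLap G *ᵥ y = t • y →
      signlessLap Gᶜ *ᵥ y = (c - t) • y + (∑ j, y j) • (fun _ => (1 : ℝ)) := by
    intro t y hy
    funext v
    have hs := signlessLap_sum_mulVec G y v
    have hyv : (signlessLap G *ᵥ y) v = t * y v := by rw [hy]; simp
    simp only [Pi.add_apply, Pi.smul_apply, smul_eq_mul, mul_one]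
    rw [hyv, ← hcdef] at hs
    linarith
  -- the eigenvector with eigenvalue > c
  obtain ⟨x, hroot, hx⟩ := h2
  obtain ⟨iw, hiw⟩ := exists_eigvec_index hA hroot
  set w : V → ℝ := ⇑(b iw) with hwdef
  have hw : signlessLap G *ᵥ w = x • w := by
    rw [← hiw]; exact hA.mulVec_eigenvectorBasis iw
  set t : ℝ := ∑ j, w j with htdef
  have hQHw : signlessLap Gᶜ *ᵥ w = (c - x) • w + t • (fun _ => (1 : ℝ)) := hQH x w hw
  have hww : w ⬝ᵥ w = 1 := by
    have := hinner iw iw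
    simpa [dotProduct] using this
  have hwQw : w ⬝ᵥ (signlessLap Gᶜ *ᵥ w) = (c - x) + t * t := by
    rw [hQHw, dotProduct_add, dotProduct_smul, dotProduct_smul]
    have hd1 : w ⬝ᵥ (fun _ => (1 : ℝ)) = t := by simp [dotProduct, htdef]
    rw [hww, hd1]
    simp [smul_eq_mul]
  -- Case A: an eigenvector for c with nonzero coordinate sum gives a contradiction
  have caseA : ∀ k, hA.eigenvalues k = c → (∑ v, ⇑(b k) v) ≠ 0 → False := by
    intro k hk hs
    set y : V → ℝ := ⇑(b k) with hydef
    set s : ℝ := ∑ v, y v with hsdef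
    have hy : signlessLap G *ᵥ y = c • y := by
      rw [← hk]; exact hA.mulVec_eigenvectorBasis k
    have hQHy : signlessLap Gᶜ *ᵥ y = s • (fun _ => (1 : ℝ)) := by
      rw [hQH c y hy]
      funext v; simp [hsdef]
    have hex : ∃ u : V → ℝ, (signlessLap Gᶜ *ᵥ u = fun _ => (1 : ℝ)) ∧
        ((u ⬝ᵥ fun _ => (1 : ℝ)) = 1) := by
      refine ⟨s⁻¹ • y, ?_, ?_⟩
      · rw [mulVec_smul, hQHy]
        funext v; simp [inv_mul_cancel₀ hs]
      · simp [dotProduct, smul_eq_mul, ← Finset.mul_sum, inv_mul_cancel₀ hs, ← hsdef]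
    obtain ⟨u, hQHu, hd2⟩ := hex
    have hd1 : w ⬝ᵥ (fun _ => (1 : ℝ)) = t := by simp [dotProduct, htdef]
    have hd3 : u ⬝ᵥ (signlessLap Gᶜ *ᵥ w) = t := by
      rw [signlessLap_dot_symm Gᶜ u w, hQHu, hd1]
    have e2 : (w - t • u) ⬝ᵥ (signlessLap Gᶜ *ᵥ (w - t • u)) = c - x := by
      simp only [mulVec_sub, mulVec_smul, hQHu, sub_dotProduct, dotProduct_sub,
        smul_dotProduct, dotProduct_smul, smul_eq_mul, hd1, hd2, hd3, hwQw]
      ring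
    have := signlessLap_quadform_nonneg Gᶜ (w - t • u)
    rw [e2] at this
    linarith
  -- the two eigenvectors for c
  obtain ⟨i, j, hij, hei, hej⟩ := two_indices hA h1
  by_cases hsi : (∑ v, ⇑(b i) v) = 0
  swap
  · exact caseA i hei hsi
  by_cases hsj : (∑ v, ⇑(b j) v) = 0
  swap
  · exact caseA j hej hsj
  -- Case B: both eigenvectors are in the kernel of the complement's signless Laplacian
  set vi : V → ℝ := ⇑(b i) with hvidef
  set vj : V → ℝ := ⇑(b j) with hvjdef
  have hker : ∀ k, hA.eigenvalues k = c → (∑ v, ⇑(b k) v) = 0 →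
      signlessLap Gᶜ *ᵥ ⇑(b k) = 0 := by
    intro k hk hs
    have hy : signlessLap G *ᵥ ⇑(b k) = c • ⇑(b k) := by
      rw [← hk]; exact hA.mulVec_eigenvectorBasis k
    rw [hQH c _ hy, hs]
    funext v; simp
  have hkeri := hker i hei hsi
  have hkerj := hker j hej hsj
  have hedge : ∀ (y : V → ℝ), signlessLap Gᶜ *ᵥ y = 0 →
      ∀ a b', Gᶜ.Adj a b' → y a + y b' = 0 := by
    intro y hy
    apply signlessLap_quadform_zero Gᶜ
    rw [hy]; simp
  have hzero : ∀ (y : V → ℝ), signlessLap Gᶜ *ᵥ y = 0 → y v0 = 0 → ∀ v, y v = 0 := by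
    intro y hy h0 v
    obtain ⟨p⟩ := hconn.preconnected v0 v
    exact walk_prop (hedge y hy) p h0
  have hvi0 : vi v0 ≠ 0 := by
    intro h0
    have hz : ∀ v, vi v = 0 := hzero vi hkeri h0
    have : b i = 0 := by
      apply PiLp.ext; intro v; exact hz v
    exact b.orthonormal.ne_zero i this
  have hvj0 : vj v0 ≠ 0 := by
    intro h0
    have hz : ∀ v, vj v = 0 := hzero vj hkerj h0
    have : b j = 0 := by
      apply PiLp.ext; intro v; exact hz v
    exact b.orthonormal.ne_zero j this
  set w' : V → ℝ := (vj v0) • vi - (vi v0) • vj with hw'def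
  have hkerw' : signlessLap Gᶜ *ᵥ w' = 0 := by
    rw [hw'def, mulVec_sub, mulVec_smul, mulVec_smul, hkeri, hkerj]
    simp
  have hw'0 : w' v0 = 0 := by
    simp only [hw'def, Pi.sub_apply, Pi.smul_apply, smul_eq_mul]
    ring
  have hall : ∀ v, w' v = 0 := hzero w' hkerw' hw'0
  have key : (vj v0) * (∑ v, vi v * vj v) = (vi v0) * (∑ v, vj v * vj v) := by
    rw [Finset.mul_sum, Finset.mul_sum]
    apply Finset.sum_congr rfl
    intro v _
    have h := hall v
    simp only [hw'def, Pi.sub_apply, Pi.smul_apply, smul_eq_mul, sub_eq_zero] at h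
    linear_combination (vj v) * h
  rw [hinner i j, hinner j j, if_neg hij, if_pos rfl, mul_zero, mul_one] at key
  exact hvi0 key.symm
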